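/- Let $\Sigma \in \mathbb{R}^{d\times d}$ be a symmetric PSD matrix with strictly positive diagonal $D$ satisfying $\min_i D_{ii} \ge (1-\epsilon)\max_i D_{ii}$ for some $\epsilon \in (0,1)$. Define the approximation error $\mathrm{err}(A,B) = \sup_{\lVert v \rVert_2 = 1} |v^\top A v - v^\top B v|$. Let $R_\circ = D^{-1/2}(\Sigma - D)D^{-1/2}$ with eigendecomposition $Q \Lambda Q^\top$ (eigenvalues in non-increasing order), and for $1 \le t \le d-1$ let $\Sigma^{\mathrm{ms}}_t = D + D^{1/2}[Q]_t[\Lambda]_t[Q]_t^\top D^{1/2}$ be the masked sketch of rank $t$, and let $\Sigma^{\mathrm{lr}}_t$ be the best rank-$t$ approximation of $\Sigma$ in operator norm. If the $(t+1)$-th eigenvalue of $D^{-1/2}\Sigma D^{-1/2}$ is at least $1$, then $\mathrm{err}(\Sigma, \Sigma^{\mathrm{ms}}_t) \le \mathrm{err}(\Sigma, \Sigma^{\mathrm{lr}}_t)/(1-\epsilon)$. -/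

import Mathlib

open Matrix

/-- Quadratic-form approximation error: `sup_{‖v‖₂ = 1} |vᵀ A v - vᵀ B v|`. -/
noncomputable def quadErr {d : ℕ} (A B : Matrix (Fin d) (Fin d) ℝ) : ℝ :=
  sSup {x : ℝ | ∃ v : Fin d → ℝ,
    (∑ i, v i ^ 2) = 1 ∧ x = |v ⬝ᵥ A.mulVec v - v ⬝ᵥ B.mulVec v|}

lemma quad_conj {d : ℕ} (A M : Matrix (Fin d) (Fin d) ℝ) (v : Fin d → ℝ) :
    v ⬝ᵥ (Aᵀ * M * A).mulVec v = (A.mulVec v) ⬝ᵥ M.mulVec (A.mulVec v) := by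
  rw [← Matrix.mulVec_mulVec, ← Matrix.mulVec_mulVec, Matrix.dotProduct_mulVec,
    Matrix.vecMul_transpose]

lemma quad_diag {d : ℕ} (g : Fin d → ℝ) (v : Fin d → ℝ) :
    v ⬝ᵥ (Matrix.diagonal g).mulVec v = ∑ i, g i * v i ^ 2 := by
  simp only [dotProduct, Matrix.mulVec_diagonal]
  exact Finset.sum_congr rfl fun i _ => by ring

lemma dot_self_eq {d : ℕ} (v : Fin d → ℝ) : v ⬝ᵥ v = ∑ i, v i ^ 2 := by
  simp only [dotProduct]
  exact Finset.sum_congr rfl fun i _ => by ring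

lemma quadSet_bdd {d : ℕ} (A B : Matrix (Fin d) (Fin d) ℝ) :
    BddAbove {x : ℝ | ∃ v : Fin d → ℝ,
      (∑ i, v i ^ 2) = 1 ∧ x = |v ⬝ᵥ A.mulVec v - v ⬝ᵥ B.mulVec v|} := by
  use ∑ i, ∑ j, |A i j - B i j|
  rintro x ⟨v, hv, rfl⟩
  have hv1 : ∀ i, |v i| ≤ 1 := by
    intro i
    have h1 : v i ^ 2 ≤ 1 := by
      rw [← hv]
      exact Finset.single_le_sum (f := fun i => v i ^ 2) (fun j _ => sq_nonneg _)
        (Finset.mem_univ i)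
    nlinarith [abs_nonneg (v i), sq_abs (v i)]
  have key : v ⬝ᵥ A.mulVec v - v ⬝ᵥ B.mulVec v
      = ∑ i, ∑ j, v i * ((A i j - B i j) * v j) := by
    rw [← dotProduct_sub, ← Matrix.sub_mulVec]
    simp [dotProduct, Matrix.mulVec, Finset.mul_sum, Matrix.sub_apply]
  rw [key]
  calc |∑ i, ∑ j, v i * ((A i j - B i j) * v j)|
      ≤ ∑ i, |∑ j, v i * ((A i j - B i j) * v j)| := Finset.abs_sum_le_sum_abs _ _
    _ ≤ ∑ i, ∑ j, |v i * ((A i j - B i j) * v j)| :=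
        Finset.sum_le_sum fun i _ => Finset.abs_sum_le_sum_abs _ _
    _ ≤ ∑ i, ∑ j, |A i j - B i j| := by
        refine Finset.sum_le_sum fun i _ => Finset.sum_le_sum fun j _ => ?_
        rw [abs_mul, abs_mul]
        have h1 := hv1 i; have h2 := hv1 j
        have := abs_nonneg (A i j - B i j)
        have := abs_nonneg (v i); have := abs_nonneg (v j)
        have h3 : |v i| * (|A i j - B i j| * |v j|) ≤ 1 * (|A i j - B i j| * 1) :=
          mul_le_mul h1 (mul_le_mul_of_nonneg_left h2 (abs_nonneg _)) (by positivity) one_pos.le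
        linarith

theorem stmt_8 {d : ℕ} (Sig : Matrix (Fin d) (Fin d) ℝ) (hSig : Sig.PosSemidef)
    (hdiag : ∀ i, 0 < Sig i i)
    (ε : ℝ) (hε : ε ∈ Set.Ioo (0 : ℝ) 1)
    (hunif : ∀ i j, (1 - ε) * Sig j j ≤ Sig i i)
    -- diagonal `D`, its square root, and inverse square root
    (D Dhalf Dinvhalf : Matrix (Fin d) (Fin d) ℝ)
    (hD : D = Matrix.diagonal (fun i => Sig i i))
    (hDhalf : Dhalf = Matrix.diagonal (fun i => Real.sqrt (Sig i i)))
    (hDinvhalf : Dinvhalf = Matrix.diagonal (fun i => (Real.sqrt (Sig i i))⁻¹))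
    -- eigendecomposition of the normalized residual `R∘ = D^{-1/2}(Σ - D)D^{-1/2}`
    (Q : Matrix (Fin d) (Fin d) ℝ) (Λ : Fin d → ℝ)
    (hQ1 : Q * Qᵀ = 1) (hQ2 : Qᵀ * Q = 1) (hΛsort : Antitone Λ)
    (hdecomp : Dinvhalf * (Sig - D) * Dinvhalf = Q * Matrix.diagonal Λ * Qᵀ)
    (t : ℕ) (ht1 : 1 ≤ t) (htd : t < d)
    -- the `(t+1)`-th eigenvalue of `D^{-1/2} Σ D^{-1/2}` is at least `1`
    (heig : 1 ≤ 1 + Λ ⟨t, htd⟩)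
    -- the masked sketch of rank `t`
    (Sigs : Matrix (Fin d) (Fin d) ℝ)
    (hSigs : Sigs = D + Dhalf *
      (Q * Matrix.diagonal (fun i => if i.val < t then Λ i else 0) * Qᵀ) * Dhalf) :
    -- the masked sketch is within `1/(1-ε)` of any rank-`t` approximation,
    -- in particular of the optimal one `Σ^lr_t`
    ∀ B : Matrix (Fin d) (Fin d) ℝ, B.rank ≤ t →
      quadErr Sig Sigs ≤ quadErr Sig B / (1 - ε) := by
  obtain ⟨hε0, hε1⟩ := hε
  intro B hB
  have hd0 : 0 < d := lt_of_le_of_lt (Nat.zero_le t) htd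
  set t' : Fin d := ⟨t, htd⟩ with ht'
  have hΛt : 0 ≤ Λ t' := by linarith
  obtain ⟨i0, -, hi0⟩ := Finset.exists_max_image Finset.univ (fun i => Sig i i)
    ⟨⟨0, hd0⟩, Finset.mem_univ _⟩
  have hi0' : ∀ j, Sig j j ≤ Sig i0 i0 := fun j => hi0 j (Finset.mem_univ j)
  -- basic diagonal matrix identities
  have hs_pos : ∀ i, 0 < Real.sqrt (Sig i i) := fun i => Real.sqrt_pos.2 (hdiag i)
  have hsq : ∀ i, Real.sqrt (Sig i i) * Real.sqrt (Sig i i) = Sig i i :=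
    fun i => Real.mul_self_sqrt (hdiag i).le
  have hDh_sym : Dhalfᵀ = Dhalf := by rw [hDhalf, Matrix.diagonal_transpose]
  have hDi_sym : Dinvhalfᵀ = Dinvhalf := by rw [hDinvhalf, Matrix.diagonal_transpose]
  have hDhD : Dhalf * Dinvhalf = 1 := by
    rw [hDhalf, hDinvhalf, Matrix.diagonal_mul_diagonal, ← Matrix.diagonal_one]
    exact congrArg Matrix.diagonal (funext fun i => mul_inv_cancel₀ (hs_pos i).ne')
  have hDiD : Dinvhalf * Dhalf = 1 := by
    rw [hDhalf, hDinvhalf, Matrix.diagonal_mul_diagonal, ← Matrix.diagonal_one]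
    exact congrArg Matrix.diagonal (funext fun i => inv_mul_cancel₀ (hs_pos i).ne')
  have hDhh : Dhalf * Dhalf = D := by
    rw [hDhalf, hD, Matrix.diagonal_mul_diagonal]
    exact congrArg Matrix.diagonal (funext fun i => hsq i)
  have hNorm : Dinvhalf * Sig * Dinvhalf = 1 + Q * Matrix.diagonal Λ * Qᵀ := by
    have e1 : Dinvhalf * Sig * Dinvhalf
        = Dinvhalf * (Sig - D) * Dinvhalf + Dinvhalf * D * Dinvhalf := by noncomm_ring
    have e2 : Dinvhalf * D * Dinvhalf = 1 := by
      rw [← hDhh]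
      calc Dinvhalf * (Dhalf * Dhalf) * Dinvhalf
          = (Dinvhalf * Dhalf) * (Dhalf * Dinvhalf) := by noncomm_ring
        _ = 1 := by rw [hDiD, hDhD, one_mul]
    rw [e1, e2, hdecomp, add_comm]
  have hSigEq : Sig = Dhalf * (1 + Q * Matrix.diagonal Λ * Qᵀ) * Dhalf := by
    calc Sig = (Dhalf * Dinvhalf) * Sig * (Dinvhalf * Dhalf) := by
          rw [hDhD, hDiD, one_mul, mul_one]
      _ = Dhalf * (Dinvhalf * Sig * Dinvhalf) * Dhalf := by noncomm_ring
      _ = Dhalf * (1 + Q * Matrix.diagonal Λ * Qᵀ) * Dhalf := by rw [hNorm]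
  -- conjugated matrix A = D^{-1/2} Q satisfies Aᵀ Σ A = 1 + diag Λ
  set A : Matrix (Fin d) (Fin d) ℝ := Dinvhalf * Q with hA_def
  have hA : Aᵀ * Sig * A = 1 + Matrix.diagonal Λ := by
    have : Aᵀ * Sig * A = Qᵀ * (Dinvhalf * Sig * Dinvhalf) * Q := by
      rw [hA_def, Matrix.transpose_mul, hDi_sym]; noncomm_ring
    rw [this, hNorm]
    calc Qᵀ * (1 + Q * Matrix.diagonal Λ * Qᵀ) * Q
        = Qᵀ * Q + (Qᵀ * Q) * Matrix.diagonal Λ * (Qᵀ * Q) := by noncomm_ring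
      _ = 1 + Matrix.diagonal Λ := by rw [hQ2]; simp
  -- every eigenvalue is ≥ -1
  have hge : ∀ i, -1 ≤ Λ i := by
    intro i
    have h0 := hSig.dotProduct_mulVec_nonneg (A.mulVec (Pi.single i 1))
    rw [star_trivial, ← quad_conj, hA] at h0
    have : (1 : Matrix (Fin d) (Fin d) ℝ) + Matrix.diagonal Λ
        = Matrix.diagonal (fun j => 1 + Λ j) := by
      rw [← Matrix.diagonal_one, Matrix.diagonal_add]
    rw [this, quad_diag] at h0
    have : ∑ j, (1 + Λ j) * (Pi.single i 1 : Fin d → ℝ) j ^ 2 = 1 + Λ i := by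
      rw [Finset.sum_eq_single i]
      · simp
      · intro j _ hj; simp [Pi.single_eq_of_ne hj]
      · intro h; exact absurd (Finset.mem_univ i) h
    rw [this] at h0
    linarith
  -- the tail diagonal
  set tail : Fin d → ℝ := fun i => if i.val < t then 0 else Λ i with htail
  have hdiff : Sig - Sigs = (Qᵀ * Dhalf)ᵀ * Matrix.diagonal tail * (Qᵀ * Dhalf) := by
    have hΛsplit : Matrix.diagonal Λ
        = Matrix.diagonal (fun i => if i.val < t then Λ i else 0) + Matrix.diagonal tail := by
      rw [Matrix.diagonal_add]
      refine congrArg Matrix.diagonal (funext fun i => ?_)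
      by_cases h : i.val < t <;> simp [htail, h]
    have e1 : (Qᵀ * Dhalf)ᵀ = Dhalf * Q := by
      rw [Matrix.transpose_mul, hDh_sym, Matrix.transpose_transpose]
    rw [e1, hSigs, hSigEq, hΛsplit, ← hDhh]
    noncomm_ring
  have htail_abs : ∀ i, |tail i| ≤ 1 + Λ t' := by
    intro i
    by_cases h : i.val < t
    · simp only [htail, if_pos h, abs_zero]; linarith
    · simp only [htail, if_neg h]
      rw [abs_le]
      constructor
      · have := hge i; linarith
      · have : Λ i ≤ Λ t' := hΛsort (by simp [ht', Fin.le_def]; omega)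
        linarith
  -- upper bound on the error of the masked sketch
  have hub : quadErr Sig Sigs ≤ (1 + Λ t') * Sig i0 i0 := by
    apply Real.sSup_le
    · rintro x ⟨v, hv, rfl⟩
      set w : Fin d → ℝ := (Qᵀ * Dhalf).mulVec v with hw
      have h1 : v ⬝ᵥ Sig.mulVec v - v ⬝ᵥ Sigs.mulVec v = ∑ i, tail i * w i ^ 2 := by
        rw [← dotProduct_sub, ← Matrix.sub_mulVec, hdiff, quad_conj, ← hw, quad_diag]
      have hwsum : ∑ i, w i ^ 2 ≤ Sig i0 i0 := by
        have e2 : (Qᵀ * Dhalf)ᵀ * 1 * (Qᵀ * Dhalf) = D := by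
          rw [Matrix.transpose_mul, hDh_sym, Matrix.transpose_transpose, ← hDhh]
          calc Dhalf * Q * 1 * (Qᵀ * Dhalf) = Dhalf * (Q * Qᵀ) * Dhalf := by noncomm_ring
            _ = Dhalf * Dhalf := by rw [hQ1]; rw [mul_one]
        have e3 : ∑ i, w i ^ 2 = ∑ i, Sig i i * v i ^ 2 := by
          have h4 := quad_conj (Qᵀ * Dhalf) 1 v
          rw [e2, Matrix.one_mulVec, ← hw] at h4
          rw [← dot_self_eq, ← h4, hD, quad_diag]
        rw [e3]
        calc ∑ i, Sig i i * v i ^ 2 ≤ ∑ i, Sig i0 i0 * v i ^ 2 :=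
              Finset.sum_le_sum fun i _ =>
                mul_le_mul_of_nonneg_right (hi0' i) (sq_nonneg _)
          _ = Sig i0 i0 := by rw [← Finset.mul_sum, hv, mul_one]
      rw [h1]
      calc |∑ i, tail i * w i ^ 2| ≤ ∑ i, |tail i * w i ^ 2| := Finset.abs_sum_le_sum_abs _ _
        _ ≤ ∑ i, (1 + Λ t') * w i ^ 2 := by
            refine Finset.sum_le_sum fun i _ => ?_
            rw [abs_mul, abs_of_nonneg (sq_nonneg (w i))]
            exact mul_le_mul_of_nonneg_right (htail_abs i) (sq_nonneg _)
        _ = (1 + Λ t') * ∑ i, w i ^ 2 := by rw [Finset.mul_sum]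
        _ ≤ (1 + Λ t') * Sig i0 i0 := by
            exact mul_le_mul_of_nonneg_left hwsum (by linarith)
    · exact mul_nonneg (by linarith) (hdiag i0).le
  -- A is injective
  have hAleft : (Qᵀ * Dhalf) * A = 1 := by
    calc (Qᵀ * Dhalf) * (Dinvhalf * Q) = Qᵀ * (Dhalf * Dinvhalf) * Q := by noncomm_ring
      _ = 1 := by rw [hDhD, mul_one, hQ2]
  have hAinj : Function.Injective A.mulVecLin := by
    intro x y h
    have h2 := congrArg (fun z => (Qᵀ * Dhalf).mulVec z) h
    simpa [Matrix.mulVecLin_apply, Matrix.mulVec_mulVec, hAleft, Matrix.one_mulVec] using h2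
  have htd1 : t + 1 ≤ d := htd
  -- subspace spanned by the first t+1 coordinates
  set W : Submodule ℝ (Fin d → ℝ) := Submodule.span ℝ
    (Set.range fun k : Fin (t+1) => (Pi.single (Fin.castLE htd1 k) 1 : Fin d → ℝ)) with hW
  have hWrank : Module.finrank ℝ W = t + 1 := by
    have hli : LinearIndependent ℝ
        (fun k : Fin (t+1) => (Pi.single (Fin.castLE htd1 k) 1 : Fin d → ℝ)) := by
      have h3 := (Pi.basisFun ℝ (Fin d)).linearIndependent.comp (Fin.castLE htd1)
        (Fin.castLE_injective htd1)
      simpa [Function.comp_def, Pi.basisFun_apply] using h3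
    rw [hW, finrank_span_eq_card hli, Fintype.card_fin]
  set U : Submodule ℝ (Fin d → ℝ) := W.map A.mulVecLin with hU
  have hUrank : Module.finrank ℝ U = t + 1 := by
    rw [hU, ← (Submodule.equivMapOfInjective _ hAinj W).finrank_eq, hWrank]
  have hKrank : d - t ≤ Module.finrank ℝ (LinearMap.ker B.mulVecLin) := by
    have h1 := B.mulVecLin.finrank_range_add_finrank_ker
    rw [Module.finrank_pi, Fintype.card_fin] at h1
    have h2 : Module.finrank ℝ (LinearMap.range B.mulVecLin) ≤ t := hB
    omega
  -- find a nonzero vector in U ∩ ker B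
  have hUK : ∃ u ∈ U ⊓ LinearMap.ker B.mulVecLin, u ≠ 0 := by
    rw [← Submodule.ne_bot_iff]
    intro hbot
    have h1 := Submodule.finrank_sup_add_finrank_inf_eq U (LinearMap.ker B.mulVecLin)
    rw [hbot, finrank_bot, add_zero] at h1
    have h2 : Module.finrank ℝ ↥(U ⊔ LinearMap.ker B.mulVecLin) ≤ d := by
      have h3 := Submodule.finrank_le (U ⊔ LinearMap.ker B.mulVecLin)
      rwa [Module.finrank_pi, Fintype.card_fin] at h3
    omega
  obtain ⟨u, hu_mem, hu_ne⟩ := hUK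
  obtain ⟨hu_U, hu_K⟩ := Submodule.mem_inf.1 hu_mem
  obtain ⟨x, hxW, hxu⟩ := Submodule.mem_map.1 hu_U
  have hxu' : A.mulVec x = u := hxu
  have hBu : B.mulVec u = 0 := by
    simpa [Matrix.mulVecLin_apply] using LinearMap.mem_ker.1 hu_K
  have hx0 : ∀ j : Fin d, t < j.val → x j = 0 := by
    intro j hj
    refine Submodule.span_induction (p := fun y _ => y j = 0) ?_ ?_ ?_ ?_ hxW
    · rintro y ⟨k, rfl⟩
      have hk := k.isLt
      refine Pi.single_eq_of_ne ?_ 1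
      simp only [ne_eq, Fin.ext_iff, Fin.coe_castLE]
      omega
    · rfl
    · intro a b _ _ ha hb; simp [ha, hb]
    · intro r a _ ha; simp [ha]
  -- quadratic form identities for u
  have hnsq : 0 < u ⬝ᵥ u := by
    rw [dot_self_eq]
    obtain ⟨i, hi⟩ := Function.ne_iff.1 hu_ne
    exact Finset.sum_pos' (fun j _ => sq_nonneg _)
      ⟨i, Finset.mem_univ i, pow_two_pos_of_ne_zero hi⟩
  have hQF1 : u ⬝ᵥ Sig.mulVec u = ∑ i, (1 + Λ i) * x i ^ 2 := by
    rw [← hxu', ← quad_conj, hA,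
      show (1 : Matrix (Fin d) (Fin d) ℝ) + Matrix.diagonal Λ
          = Matrix.diagonal (fun j => 1 + Λ j) by
        rw [← Matrix.diagonal_one, Matrix.diagonal_add], quad_diag]
  have hxx : ∑ i, (Q.mulVec x) i ^ 2 = ∑ i, x i ^ 2 := by
    have h4 := quad_conj Q 1 x
    rw [show Qᵀ * 1 * Q = (1 : Matrix (Fin d) (Fin d) ℝ) by rw [mul_one, hQ2],
      Matrix.one_mulVec, Matrix.one_mulVec, dot_self_eq, dot_self_eq] at h4
    exact h4.symm
  have hQF2 : u ⬝ᵥ u = ∑ i, (Sig i i)⁻¹ * (Q.mulVec x) i ^ 2 := by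
    have e5 : Aᵀ * A = Qᵀ * Matrix.diagonal (fun i => (Sig i i)⁻¹) * Q := by
      have e6 : Dinvhalf * Dinvhalf = Matrix.diagonal (fun i => (Sig i i)⁻¹) := by
        rw [hDinvhalf, Matrix.diagonal_mul_diagonal]
        refine congrArg Matrix.diagonal (funext fun i => ?_)
        rw [← mul_inv, hsq i]
      rw [hA_def, Matrix.transpose_mul, hDi_sym]
      calc Qᵀ * Dinvhalf * (Dinvhalf * Q) = Qᵀ * (Dinvhalf * Dinvhalf) * Q := by noncomm_ring
        _ = _ := by rw [e6]
    calc u ⬝ᵥ u = x ⬝ᵥ (Aᵀ * 1 * A).mulVec x := by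
          rw [quad_conj, Matrix.one_mulVec, hxu']
      _ = x ⬝ᵥ (Qᵀ * Matrix.diagonal (fun i => (Sig i i)⁻¹) * Q).mulVec x := by
          rw [mul_one, e5]
      _ = ∑ i, (Sig i i)⁻¹ * (Q.mulVec x) i ^ 2 := by rw [quad_conj, quad_diag]
  set β : ℝ := (1 - ε) * Sig i0 i0 with hβ
  have hβpos : 0 < β := mul_pos (by linarith) (hdiag i0)
  have hxsum : β * (u ⬝ᵥ u) ≤ ∑ i, x i ^ 2 := by
    have h6 : u ⬝ᵥ u ≤ β⁻¹ * ∑ i, x i ^ 2 := by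
      rw [hQF2, ← hxx, Finset.mul_sum]
      refine Finset.sum_le_sum fun i _ => ?_
      refine mul_le_mul_of_nonneg_right ?_ (sq_nonneg _)
      exact inv_anti₀ hβpos (hunif i i0)
    calc β * (u ⬝ᵥ u) ≤ β * (β⁻¹ * ∑ i, x i ^ 2) := mul_le_mul_of_nonneg_left h6 hβpos.le
      _ = ∑ i, x i ^ 2 := by field_simp
  have hSigu : (1 + Λ t') * (β * (u ⬝ᵥ u)) ≤ u ⬝ᵥ Sig.mulVec u := by
    rw [hQF1]
    have h7 : (1 + Λ t') * ∑ i, x i ^ 2 ≤ ∑ i, (1 + Λ i) * x i ^ 2 := by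
      rw [Finset.mul_sum]
      refine Finset.sum_le_sum fun i _ => ?_
      by_cases h : i.val ≤ t
      · refine mul_le_mul_of_nonneg_right ?_ (sq_nonneg _)
        have : Λ t' ≤ Λ i := hΛsort (show i ≤ t' from h)
        linarith
      · rw [hx0 i (by omega)]; simp
    calc (1 + Λ t') * (β * (u ⬝ᵥ u)) ≤ (1 + Λ t') * ∑ i, x i ^ 2 :=
          mul_le_mul_of_nonneg_left hxsum (by linarith)
      _ ≤ _ := h7
  -- normalize u and conclude the lower bound
  set nsq : ℝ := u ⬝ᵥ u with hnsq_def
  set sN : ℝ := Real.sqrt nsq with hsN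
  have hsN_pos : 0 < sN := Real.sqrt_pos.2 hnsq
  have hss : sN * sN = nsq := Real.mul_self_sqrt hnsq.le
  have hveq : (fun i => sN⁻¹ * u i) = sN⁻¹ • u := by funext i; simp
  have hv_unit : ∑ i, (sN⁻¹ * u i) ^ 2 = 1 := by
    have h8 : ∑ i, (sN⁻¹ * u i) ^ 2 = sN⁻¹ ^ 2 * ∑ i, u i ^ 2 := by
      rw [Finset.mul_sum]; exact Finset.sum_congr rfl fun i _ => by ring
    rw [h8, ← dot_self_eq, ← hnsq_def, ← hss]
    field_simp
  have hvSig : (fun i => sN⁻¹ * u i) ⬝ᵥ Sig.mulVec (fun i => sN⁻¹ * u i)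
      = nsq⁻¹ * (u ⬝ᵥ Sig.mulVec u) := by
    rw [hveq, Matrix.mulVec_smul, dotProduct_smul, smul_dotProduct, smul_eq_mul,
      smul_eq_mul, ← mul_assoc, ← mul_inv, hss]
  have hvB : (fun i => sN⁻¹ * u i) ⬝ᵥ B.mulVec (fun i => sN⁻¹ * u i) = 0 := by
    rw [hveq, Matrix.mulVec_smul, hBu]; simp
  have hlbB : (1 + Λ t') * β ≤ quadErr Sig B := by
    have h8 : (1 + Λ t') * β ≤ (fun i => sN⁻¹ * u i) ⬝ᵥ Sig.mulVec (fun i => sN⁻¹ * u i) := by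
      rw [hvSig]
      have h9 : nsq⁻¹ * ((1 + Λ t') * (β * nsq)) ≤ nsq⁻¹ * (u ⬝ᵥ Sig.mulVec u) :=
        mul_le_mul_of_nonneg_left hSigu (inv_nonneg.2 hnsq.le)
      calc (1 + Λ t') * β = nsq⁻¹ * ((1 + Λ t') * (β * nsq)) := by
            field_simp [hnsq.ne']
        _ ≤ _ := h9
    have h10 : (fun i => sN⁻¹ * u i) ⬝ᵥ Sig.mulVec (fun i => sN⁻¹ * u i)
        ≤ |(fun i => sN⁻¹ * u i) ⬝ᵥ Sig.mulVec (fun i => sN⁻¹ * u i)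
            - (fun i => sN⁻¹ * u i) ⬝ᵥ B.mulVec (fun i => sN⁻¹ * u i)| := by
      rw [hvB, sub_zero]; exact le_abs_self _
    refine le_trans (h8.trans h10) (le_csSup (quadSet_bdd Sig B) ?_)
    exact ⟨fun i => sN⁻¹ * u i, hv_unit, rfl⟩
  -- put everything together
  rw [le_div_iff₀ (show (0:ℝ) < 1 - ε by linarith)]
  calc quadErr Sig Sigs * (1 - ε) ≤ ((1 + Λ t') * Sig i0 i0) * (1 - ε) :=
        mul_le_mul_of_nonneg_right hub (by linarith)
    _ = (1 + Λ t') * β := by rw [hβ]; ring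
    _ ≤ quadErr Sig B := hlbB
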